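/- For continuous f ∈ 𝓘, the function v^f(x) = ∫₀^{|x|} u^{(-f)}(y) exp(2∫₀ʸ f(u)du) dy is C² on ℝ and satisfies (v^f)''(x) − 2 f(|x|) |(v^f)'(x)| = 1 for all x ∈ ℝ. -/

import Mathlib

open MeasureTheory intervalIntegral

/-- `f` is bounded on every compact subset of `ℝ`. -/
def BddOnCompacts (f : ℝ → ℝ) : Prop :=
  ∀ r : ℝ, ∃ C : ℝ, ∀ x ∈ Set.Icc (-r) r, |f x| ≤ C

/-- The transform `u^f(x) = ∫₀ˣ exp(2∫₀ʸ f(u)du) dy`. -/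
noncomputable def uf (f : ℝ → ℝ) (x : ℝ) : ℝ :=
  ∫ y in (0:ℝ)..x, Real.exp (2 * ∫ u in (0:ℝ)..y, f u)

/-- `M^f = exp(2 ∫_ℝ |f|)`. -/
noncomputable def Mf (f : ℝ → ℝ) : ℝ :=
  Real.exp (2 * ∫ u : ℝ, |f u|)

/-- The transform `v^f(x) = ∫₀^{|x|} u^{(-f)}(y) exp(2∫₀ʸ f(u)du) dy`. -/
noncomputable def vf (f : ℝ → ℝ) (x : ℝ) : ℝ :=
  ∫ y in (0:ℝ)..|x|, uf (fun u => -f u) y * Real.exp (2 * ∫ u in (0:ℝ)..y, f u)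

section Aux

lemma intInt_hasDerivAt {φ : ℝ → ℝ} (hφ : Continuous φ) (y : ℝ) :
    HasDerivAt (fun x => ∫ u in (0:ℝ)..x, φ u) (φ y) y :=
  (hφ.integral_hasStrictDerivAt 0 y).hasDerivAt

lemma intInt_continuous {φ : ℝ → ℝ} (hφ : Continuous φ) :
    Continuous (fun x => ∫ u in (0:ℝ)..x, φ u) :=
  Differentiable.continuous (fun x => (intInt_hasDerivAt hφ x).differentiableAt)

variable (f : ℝ → ℝ)

noncomputable def Ff (x : ℝ) : ℝ := ∫ u in (0:ℝ)..x, f u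

noncomputable def gg (x : ℝ) : ℝ :=
  uf (fun u => -f u) x * Real.exp (2 * Ff f x)

noncomputable def hh (x : ℝ) : ℝ := 1 + 2 * f |x| * gg f |x|

noncomputable def ww (x : ℝ) : ℝ := ∫ t in (0:ℝ)..x, hh f t

noncomputable def WW (x : ℝ) : ℝ := ∫ t in (0:ℝ)..x, ww f t

variable {f} (hc : Continuous f)
include hc

lemma Ff_hasDerivAt (y : ℝ) : HasDerivAt (Ff f) (f y) y := intInt_hasDerivAt hc y

lemma Ff_continuous : Continuous (Ff f) := intInt_continuous hc

lemma uf_neg_hasDerivAt (y : ℝ) :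
    HasDerivAt (uf (fun u => -f u)) (Real.exp (2 * ∫ u in (0:ℝ)..y, -f u)) y := by
  have hcont : Continuous fun t : ℝ => Real.exp (2 * ∫ u in (0:ℝ)..t, -f u) :=
    (Real.continuous_exp).comp (continuous_const.mul (intInt_continuous hc.neg))
  exact intInt_hasDerivAt hcont y

lemma gg_hasDerivAt (y : ℝ) : HasDerivAt (gg f) (1 + 2 * f y * gg f y) y := by
  have hu := uf_neg_hasDerivAt hc y
  have hE : HasDerivAt (fun x => Real.exp (2 * Ff f x))
      (Real.exp (2 * Ff f y) * (2 * f y)) y :=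
    ((Ff_hasDerivAt hc y).const_mul 2).exp
  have h := hu.mul hE
  have key : (∫ u in (0:ℝ)..y, -f u) = -(Ff f y) := by
    simp [Ff, intervalIntegral.integral_neg]
  convert h using 1
  case e'_4 => rfl
  case e'_5 => rfl
  case e'_8 => rfl
  rw [key, ← Real.exp_add, show 2 * -Ff f y + 2 * Ff f y = 0 by ring, Real.exp_zero]
  unfold gg
  ring

lemma gg_continuous : Continuous (gg f) :=
  Differentiable.continuous (fun x => (gg_hasDerivAt hc x).differentiableAt)

lemma hh_continuous : Continuous (hh f) := by
  unfold hh
  exact continuous_const.add ((continuous_const.mul (hc.comp continuous_abs)).mul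
    ((gg_continuous hc).comp continuous_abs))

lemma gg_zero : gg f 0 = 0 := by simp [gg, uf]

lemma gg_eq_integral (y : ℝ) :
    gg f y = ∫ t in (0:ℝ)..y, (1 + 2 * f t * gg f t) := by
  have hint : Continuous fun t => 1 + 2 * f t * gg f t :=
    continuous_const.add ((continuous_const.mul hc).mul (gg_continuous hc))
  rw [intervalIntegral.integral_eq_sub_of_hasDerivAt
      (fun t _ => gg_hasDerivAt hc t) (hint.intervalIntegrable _ _), gg_zero hc]
  ring

lemma ww_hasDerivAt (x : ℝ) : HasDerivAt (ww f) (hh f x) x :=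
  intInt_hasDerivAt (hh_continuous hc) x

lemma ww_continuous : Continuous (ww f) := intInt_continuous (hh_continuous hc)

lemma WW_hasDerivAt (x : ℝ) : HasDerivAt (WW f) (ww f x) x :=
  intInt_hasDerivAt (ww_continuous hc) x

omit hc

lemma hh_even (x : ℝ) : hh f (-x) = hh f x := by simp [hh]

lemma ww_eq_gg {x : ℝ} (hx : 0 ≤ x) (hc : Continuous f) : ww f x = gg f x := by
  rw [gg_eq_integral hc x]
  apply intervalIntegral.integral_congr
  intro t ht
  rw [Set.uIcc_of_le hx] at ht
  simp [hh, abs_of_nonneg ht.1]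

include hc

lemma ww_odd (x : ℝ) : ww f (-x) = -ww f x := by
  have h1 : (∫ t in (0:ℝ)..x, hh f (-t)) = ∫ t in (-x)..(0:ℝ), hh f t := by
    simpa using intervalIntegral.integral_comp_neg (a := (0:ℝ)) (b := x) (fun t => hh f t)
  have h2 : (∫ t in (0:ℝ)..x, hh f (-t)) = ww f x := by
    unfold ww; congr 1; ext t; rw [hh_even]
  calc ww f (-x) = -∫ t in (-x)..(0:ℝ), hh f t := intervalIntegral.integral_symm _ _
    _ = -∫ t in (0:ℝ)..x, hh f (-t) := by rw [h1]
    _ = -ww f x := by rw [h2]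

lemma WW_even (x : ℝ) : WW f (-x) = WW f x := by
  have h1 : (∫ t in (0:ℝ)..x, ww f (-t)) = ∫ t in (-x)..(0:ℝ), ww f t := by
    simpa using intervalIntegral.integral_comp_neg (a := (0:ℝ)) (b := x) (fun t => ww f t)
  have h2 : (∫ t in (0:ℝ)..x, ww f (-t)) = -WW f x := by
    rw [show (fun t => ww f (-t)) = (fun t => -ww f t) from funext (ww_odd hc)]
    rw [intervalIntegral.integral_neg]
    rfl
  calc WW f (-x) = -∫ t in (-x)..(0:ℝ), ww f t := intervalIntegral.integral_symm _ _
    _ = -∫ t in (0:ℝ)..x, ww f (-t) := by rw [h1]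
    _ = WW f x := by rw [h2, neg_neg]

omit hc in
lemma uf_neg_nonneg {y : ℝ} (hy : 0 ≤ y) : 0 ≤ uf (fun u => -f u) y :=
  intervalIntegral.integral_nonneg hy (fun _ _ => (Real.exp_pos _).le)

omit hc in
lemma gg_nonneg {y : ℝ} (hy : 0 ≤ y) : 0 ≤ gg f y :=
  mul_nonneg (uf_neg_nonneg (f := f) hy) (Real.exp_pos _).le

lemma vf_eq_WW : vf f = WW f := by
  funext x
  have key : ∀ z : ℝ, 0 ≤ z → vf f z = WW f z := by
    intro z hz
    have h1 : vf f z = ∫ y in (0:ℝ)..z, gg f y := by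
      rw [vf, abs_of_nonneg hz]; rfl
    rw [h1]
    unfold WW
    apply intervalIntegral.integral_congr
    intro t ht
    rw [Set.uIcc_of_le hz] at ht
    exact (ww_eq_gg ht.1 hc).symm
  rcases le_total 0 x with hx | hx
  · exact key x hx
  · have hvx : vf f x = vf f (-x) := by unfold vf; rw [abs_neg]
    rw [hvx, key (-x) (by linarith), WW_even hc]

lemma abs_ww (x : ℝ) : |ww f x| = gg f |x| := by
  rcases le_total 0 x with hx | hx
  · rw [abs_of_nonneg hx, ww_eq_gg hx hc]
    exact abs_of_nonneg (gg_nonneg (f := f) hx)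
  · have : ww f x = -gg f (-x) := by
      rw [show x = -(-x) by ring, ww_odd hc, neg_neg, ww_eq_gg (by linarith) hc]
    rw [abs_of_nonpos hx, this, abs_neg]
    exact abs_of_nonneg (gg_nonneg (f := f) (by linarith))

lemma deriv_vf : deriv (vf f) = ww f := by
  rw [vf_eq_WW hc]
  exact funext fun x => (WW_hasDerivAt hc x).deriv

lemma deriv_ww : deriv (ww f) = hh f := funext fun x => (ww_hasDerivAt hc x).deriv

end Aux

theorem vf_contDiff_two_and_ode (f : ℝ → ℝ) (hf : Integrable f) (hb : BddOnCompacts f)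
    (hc : Continuous f) :
    ContDiff ℝ 2 (vf f) ∧
      ∀ x : ℝ, deriv (deriv (vf f)) x - 2 * f |x| * |deriv (vf f) x| = 1 := by
  constructor
  · rw [vf_eq_WW hc, show (2 : WithTop ℕ∞) = 1 + 1 from by norm_num, contDiff_succ_iff_deriv]
    refine ⟨fun x => (WW_hasDerivAt hc x).differentiableAt, by simp, ?_⟩
    rw [show deriv (WW f) = ww f from funext fun x => (WW_hasDerivAt hc x).deriv,
      contDiff_one_iff_deriv, deriv_ww hc]
    exact ⟨fun x => (ww_hasDerivAt hc x).differentiableAt, hh_continuous hc⟩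
  · intro x
    rw [deriv_vf hc, deriv_ww hc, abs_ww hc, hh]
    ring
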